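/- arXiv:1502.06934 — 3 statements merged into one kernel-verified Lean document; each statement's English description precedes it below -/
import Mathlib

section
/- Let X : [c̲, c̄] → ℝ be non-negative, non-increasing and integrable, and define the payment T(c) = c·X(c) + ∫_c^{c̄} X(z) dz. Then for all c, ĉ ∈ [c̲, c̄]: (a) T(c) - c·X(c) ≥ T(ĉ) - c·X(ĉ) (truthfulness), and (b) T(c) - c·X(c) ≥ 0 (individual rationality). -/
open intervalIntegral

/-- For a non-negative, non-increasing, integrable allocation `X` and the
Myerson payment `T(c) = c·X(c) + ∫_c^{c̄} X(z) dz`, truthfulness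
`T(c) - c·X(c) ≥ T(ĉ) - c·X(ĉ)` and individual rationality `T(c) - c·X(c) ≥ 0` hold. -/
theorem stmt5 (clo chi : ℝ) (hcc : clo ≤ chi) (X T : ℝ → ℝ)
    (hXnonneg : ∀ c ∈ Set.Icc clo chi, 0 ≤ X c)
    (hXmono : AntitoneOn X (Set.Icc clo chi))
    (hXint : IntervalIntegrable X MeasureTheory.volume clo chi)
    (hT : ∀ c ∈ Set.Icc clo chi, T c = c * X c + ∫ z in c..chi, X z) :
    ∀ c ∈ Set.Icc clo chi, ∀ chat ∈ Set.Icc clo chi,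
      (T chat - c * X chat ≤ T c - c * X c) ∧ (0 ≤ T c - c * X c) := by
  intro c hc chat hchat
  have hsub : ∀ a ∈ Set.Icc clo chi, ∀ b ∈ Set.Icc clo chi,
      IntervalIntegrable X MeasureTheory.volume a b := by
    intro a ha b hb
    refine hXint.mono_set ?_
    rw [Set.uIcc_of_le hcc]
    exact Set.uIcc_subset_Icc ha hb
  have hTc := hT c hc
  have hTchat := hT chat hchat
  rw [hTc, hTchat]
  have hIcc_sub : ∀ a ∈ Set.Icc clo chi, ∀ b ∈ Set.Icc clo chi,
      Set.Icc a b ⊆ Set.Icc clo chi := fun a ha b hb =>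
    Set.Icc_subset_Icc ha.1 hb.2
  constructor
  · -- need: chat*X chat + ∫_chat^chi X - c*X chat ≤ c*X c + ∫_c^chi X - c*X c
    -- i.e. (chat - c) * X chat + ∫_chat^chi X ≤ ∫_c^chi X
    have hkey : (chat - c) * X chat ≤ ∫ z in c..chat, X z := by
      rcases le_total c chat with h | h
      · have hle : ∀ z ∈ Set.Icc c chat, X chat ≤ X z := fun z hz =>
          hXmono (hIcc_sub c hc chat hchat hz) hchat hz.2
        have := intervalIntegral.integral_mono_on h
          (intervalIntegrable_const) (hsub c hc chat hchat) hle
        simpa [smul_eq_mul, mul_comm] using this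
      · have hle : ∀ z ∈ Set.Icc chat c, X z ≤ X chat := fun z hz =>
          hXmono hchat (hIcc_sub chat hchat c hc hz) hz.1
        have := intervalIntegral.integral_mono_on h
          (hsub chat hchat c hc) (intervalIntegrable_const) hle
        have h2 : ∫ z in chat..c, X z ≤ (c - chat) * X chat := by
          simpa [smul_eq_mul, mul_comm] using this
        have h3 : ∫ z in c..chat, X z = -∫ z in chat..c, X z :=
          (intervalIntegral.integral_symm chat c)
        nlinarith
    have hsplit : (∫ z in c..chat, X z) + ∫ z in chat..chi, X z = ∫ z in c..chi, X z :=
      intervalIntegral.integral_add_adjacent_intervals (hsub c hc chat hchat)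
        (hsub chat hchat chi (Set.right_mem_Icc.mpr hcc))
    nlinarith
  · have : 0 ≤ ∫ z in c..chi, X z := by
      apply intervalIntegral.integral_nonneg hc.2
      intro z hz
      exact hXnonneg z (hIcc_sub c hc chi (Set.right_mem_Icc.mpr hcc) hz)
    linarith
end

section
/- In the greedy allocation (allocate min(remaining budget, capacity) units to agents in non-increasing order of G, skipping agents with G < 0), the allocation to agent i is non-decreasing in his own capacity kᵢ: if kᵢ' ≥ kᵢ with all other parameters fixed, then xᵢ(kᵢ') ≥ xᵢ(kᵢ). -/
/-- In the greedy capacitated allocation (agents processed in non-increasing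
order of `G`, each agent with `G i ≥ 0` receiving `min(capacity, remaining budget)`), the
allocation to an agent is non-decreasing in his own capacity: if `k' i₀ ≥ k i₀` and
`k' j = k j` for `j ≠ i₀`, then `x' i₀ ≥ x i₀`. -/
theorem stmt14 (n : ℕ) (G : Fin n → ℝ) (L : ℕ)
    (hG : ∀ i j : Fin n, i ≤ j → G j ≤ G i)
    (k k' : Fin n → ℕ) (i₀ : Fin n)
    (hki : k i₀ ≤ k' i₀) (hk : ∀ j, j ≠ i₀ → k' j = k j)
    (x x' : Fin n → ℕ)
    (hx : ∀ i : Fin n, x i =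
      if 0 ≤ G i then min (k i) (L - ∑ j ∈ Finset.Iio i, x j) else 0)
    (hx' : ∀ i : Fin n, x' i =
      if 0 ≤ G i then min (k' i) (L - ∑ j ∈ Finset.Iio i, x' j) else 0) :
    x i₀ ≤ x' i₀ := by
  have key : ∀ m : ℕ, ∀ j : Fin n, j.val = m → j < i₀ → x j = x' j := by
    intro m
    induction m using Nat.strong_induction_on with
    | _ m ih =>
      intro j hjm hj
      have hs : (∑ a ∈ Finset.Iio j, x a) = ∑ a ∈ Finset.Iio j, x' a := by
        apply Finset.sum_congr rfl
        intro a ha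
        rw [Finset.mem_Iio] at ha
        exact ih a.val (hjm ▸ ha) a rfl (ha.trans hj)
      rw [hx j, hx' j, hk j (ne_of_lt hj), hs]
  have hsum : (∑ j ∈ Finset.Iio i₀, x j) = ∑ j ∈ Finset.Iio i₀, x' j := by
    apply Finset.sum_congr rfl
    intro a ha
    rw [Finset.mem_Iio] at ha
    exact key a.val a rfl ha
  rw [hx i₀, hx' i₀, hsum]
  split
  · exact min_le_min hki le_rfl
  · exact le_rfl
end

section
/- In the greedy allocation with agent i's score Gᵢ(cᵢ) strictly decreasing in his reported cost cᵢ (others fixed), the number of units xᵢ allocated to agent i is non-increasing in cᵢ: if cᵢ ≤ cᵢ' then xᵢ(cᵢ) ≥ xᵢ(cᵢ'). -/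
/-- Greedy capacitated allocation to agent `i` for score vector `G`: agents are processed
in non-increasing order of score (ties broken by index), each receiving
`min(capacity, remaining budget)` while the score is nonnegative. An agent `j` has
priority over `i` if `G j > G i`, or `G j = G i` and `j < i`. -/
noncomputable def greedyAlloc (n : ℕ) (G : Fin n → ℝ) (k : Fin n → ℕ) (L : ℕ) (i : Fin n) : ℕ :=
  if 0 ≤ G i then
    min (k i)
      (L - ∑ j ∈ Finset.univ.filter
        (fun j => 0 ≤ G j ∧ (G i < G j ∨ (G j = G i ∧ j < i))), k j)
  else 0

/-- In the greedy allocation with agent `i₀`'s score `g(c)` strictly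
decreasing in his reported cost `c` (all other scores fixed), the number of units
allocated to `i₀` is non-increasing in `c`. -/
theorem stmt15 (n : ℕ) (G : Fin n → ℝ) (k : Fin n → ℕ) (L : ℕ) (i₀ : Fin n)
    (g : ℝ → ℝ) (hg : StrictAnti g) :
    ∀ c c' : ℝ, c ≤ c' →
      greedyAlloc n (Function.update G i₀ (g c')) k L i₀ ≤
        greedyAlloc n (Function.update G i₀ (g c)) k L i₀ := by
  intro c c' hcc
  have hgc : g c' ≤ g c := hg.antitone hcc
  unfold greedyAlloc
  set G1 := Function.update G i₀ (g c) with hG1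
  set G2 := Function.update G i₀ (g c') with hG2
  have h1v : G1 i₀ = g c := Function.update_self _ _ _
  have h2v : G2 i₀ = g c' := Function.update_self _ _ _
  by_cases h2 : 0 ≤ G2 i₀
  · have h1 : 0 ≤ G1 i₀ := by rw [h1v]; rw [h2v] at h2; linarith
    rw [if_pos h1, if_pos h2]
    apply min_le_min le_rfl
    apply Nat.sub_le_sub_left
    apply Finset.sum_le_sum_of_subset
    intro j hj
    simp only [Finset.mem_filter, Finset.mem_univ, true_and] at hj ⊢
    obtain ⟨hj0, hj1⟩ := hj
    have hji : j ≠ i₀ := by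
      rintro rfl
      rcases hj1 with h | ⟨_, h⟩
      · exact lt_irrefl _ h
      · exact lt_irrefl _ h
    have e1 : G1 j = G j := Function.update_of_ne hji _ _
    have e2 : G2 j = G j := Function.update_of_ne hji _ _
    rw [e1] at hj0
    rw [e1, h1v] at hj1
    rw [e2, h2v]
    refine ⟨hj0, ?_⟩
    rcases hj1 with h | ⟨he, hlt⟩
    · left; linarith
    · have : g c' ≤ G j := by rw [he] at *; linarith
      rcases lt_or_eq_of_le this with h' | h'
      · left; exact h'
      · right; exact ⟨h'.symm, hlt⟩
  · rw [if_neg h2]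
    exact Nat.zero_le _
end
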